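/- Let ρ and σ be single-qubit states with Bloch vectors x_ρ, x_σ of lengths r_ρ < 1 and r_σ < 1 respectively. Then the quantum relative entropy (base 2) equals S(ρ‖σ) = ½[ r_ρ log₂((1+r_ρ)/(1−r_ρ)) + log₂((1−r_ρ²)/(1−r_σ²)) − ((x_ρ·x_σ)/r_σ) log₂((1+r_σ)/(1−r_σ)) ]. -/

import Mathlib

open Matrix

def pauliX : Matrix (Fin 2) (Fin 2) ℂ := !![0, 1; 1, 0]
def pauliY : Matrix (Fin 2) (Fin 2) ℂ := !![0, -Complex.I; Complex.I, 0]
def pauliZ : Matrix (Fin 2) (Fin 2) ℂ := !![1, 0; 0, -1]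

/-- `bloch a x = ½ (a I + x₁ X + x₂ Y + x₃ Z)`. -/
noncomputable def bloch (a : ℝ) (x : Fin 3 → ℝ) : Matrix (Fin 2) (Fin 2) ℂ :=
  (1 / 2 : ℂ) • ((a : ℂ) • (1 : Matrix (Fin 2) (Fin 2) ℂ)
    + (x 0 : ℂ) • pauliX + (x 1 : ℂ) • pauliY + (x 2 : ℂ) • pauliZ)
/-- Matrix logarithm of a Hermitian matrix via its spectral decomposition. -/
noncomputable def matLog (A : Matrix (Fin 2) (Fin 2) ℂ) : Matrix (Fin 2) (Fin 2) ℂ :=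
  if hA : A.IsHermitian then
    (hA.eigenvectorUnitary : Matrix (Fin 2) (Fin 2) ℂ) *
      Matrix.diagonal (fun i => (Real.log (hA.eigenvalues i) : ℂ)) *
      star (hA.eigenvectorUnitary : Matrix (Fin 2) (Fin 2) ℂ)
  else 0

/-- Quantum relative entropy in base 2, `Tr(ρ log₂ ρ) − Tr(ρ log₂ σ)`,
for states of full support. -/
noncomputable def qRelEnt (ρ σ : Matrix (Fin 2) (Fin 2) ℂ) : ℝ :=
  (ρ * (matLog ρ - matLog σ)).trace.re / Real.log 2

/-! ### Auxiliary lemmas -/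

lemma bloch_eq (x : Fin 3 → ℝ) : bloch 1 x =
    !![(1 + (x 2:ℂ))/2, ((x 0:ℂ) - Complex.I * x 1)/2;
       ((x 0:ℂ) + Complex.I * x 1)/2, (1 - (x 2:ℂ))/2] := by
  ext i j
  fin_cases i <;> fin_cases j <;>
    simp [bloch, pauliX, pauliY, pauliZ, Matrix.one_apply] <;> ring

lemma bloch_herm (x : Fin 3 → ℝ) : (bloch 1 x).IsHermitian := by
  rw [Matrix.IsHermitian, bloch_eq]
  ext i j
  fin_cases i <;> fin_cases j <;>
    simp [Matrix.conjTranspose_apply, Complex.ext_iff] <;> ring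

lemma bloch_trace (x : Fin 3 → ℝ) : (bloch 1 x).trace = 1 := by
  rw [bloch_eq, Matrix.trace_fin_two]
  simp; ring

lemma bloch_det (x : Fin 3 → ℝ) : (bloch 1 x).det = ((1 - ∑ i, x i ^ 2 : ℝ) : ℂ) / 4 := by
  rw [bloch_eq, Matrix.det_fin_two]
  simp [Fin.sum_univ_three, Complex.ext_iff, ← Complex.ofReal_pow]
  constructor <;> ring

lemma bloch_mul_trace (x y : Fin 3 → ℝ) :
    ((bloch 1 x) * (bloch 1 y)).trace = ((1 + ∑ i, x i * y i : ℝ) : ℂ) / 2 := by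
  rw [bloch_eq, bloch_eq, Matrix.trace_fin_two]
  simp [Matrix.mul_apply, Fin.sum_univ_two, Fin.sum_univ_three, Complex.ext_iff,
    ← Complex.ofReal_pow]
  constructor <;> ring

lemma trace_eq_sum_eig {A : Matrix (Fin 2) (Fin 2) ℂ} (hA : A.IsHermitian) :
    A.trace = ∑ i, (hA.eigenvalues i : ℂ) := by
  conv_lhs => rw [hA.spectral_theorem, Unitary.conjStarAlgAut_apply]
  rw [Matrix.trace_mul_cycle]
  rw [show star (hA.eigenvectorUnitary : Matrix (Fin 2) (Fin 2) ℂ) *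
      (hA.eigenvectorUnitary : Matrix (Fin 2) (Fin 2) ℂ) = 1 from
    Matrix.mem_unitaryGroup_iff'.mp hA.eigenvectorUnitary.2, one_mul, Matrix.trace_diagonal]
  rfl

lemma trace_mul_matLog_self {A : Matrix (Fin 2) (Fin 2) ℂ} (hA : A.IsHermitian) :
    (A * matLog A).trace = ∑ i, (hA.eigenvalues i : ℂ) * Real.log (hA.eigenvalues i) := by
  rw [matLog, dif_pos hA]
  set V := (hA.eigenvectorUnitary : Matrix (Fin 2) (Fin 2) ℂ) with hV
  rw [show A * (V * Matrix.diagonal (fun i => (Real.log (hA.eigenvalues i) : ℂ)) * star V)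
      = A * V * Matrix.diagonal (fun i => (Real.log (hA.eigenvalues i) : ℂ)) * star V by
    simp only [Matrix.mul_assoc]]
  rw [Matrix.trace_mul_cycle, ← Matrix.mul_assoc, hV,
    (show star (hA.eigenvectorUnitary : Matrix (Fin 2) (Fin 2) ℂ) * A *
      (hA.eigenvectorUnitary : Matrix (Fin 2) (Fin 2) ℂ) =
      Matrix.diagonal (RCLike.ofReal ∘ hA.eigenvalues) by
      have := hA.conjStarAlgAut_star_eigenvectorUnitary
      rwa [Unitary.conjStarAlgAut_apply, Unitary.coe_star, star_star] at this),
    Matrix.diagonal_mul_diagonal, Matrix.trace_diagonal]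
  rfl

lemma matLog_eq_affine {A : Matrix (Fin 2) (Fin 2) ℂ} (hA : A.IsHermitian) (α β : ℂ)
    (h : ∀ i, α + β * (hA.eigenvalues i : ℂ) = (Real.log (hA.eigenvalues i) : ℂ)) :
    matLog A = α • 1 + β • A := by
  rw [matLog, dif_pos hA]
  set V := (hA.eigenvectorUnitary : Matrix (Fin 2) (Fin 2) ℂ) with hV
  have h2 : V * star V = 1 := Matrix.mem_unitaryGroup_iff.mp hA.eigenvectorUnitary.2
  have hd : Matrix.diagonal (fun i => (Real.log (hA.eigenvalues i) : ℂ))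
      = α • (1 : Matrix (Fin 2) (Fin 2) ℂ)
        + β • Matrix.diagonal (RCLike.ofReal ∘ hA.eigenvalues) := by
    ext i j
    by_cases hij : i = j
    · subst hij
      simp [Matrix.diagonal_apply_eq, Matrix.one_apply, ← h i]
    · simp [Matrix.diagonal_apply_ne _ hij, Matrix.one_apply_ne hij]
  rw [hd]
  conv_rhs => rw [hA.spectral_theorem, Unitary.conjStarAlgAut_apply, ← hV]
  rw [Matrix.mul_add, Matrix.add_mul, Matrix.mul_smul, Matrix.smul_mul,
    Matrix.mul_smul, Matrix.smul_mul, Matrix.mul_one, h2]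

lemma root_pair {p q r : ℝ} (hs : p + q = 1) (hp : p * q = (1 - r^2)/4) :
    (p = (1+r)/2 ∨ p = (1-r)/2) ∧ (q = (1+r)/2 ∨ q = (1-r)/2) := by
  have hq : q = 1 - p := by linarith
  subst hq
  have h1 : (p - (1+r)/2) * (p - (1-r)/2) = 0 := by linear_combination -hp
  have h2 : ((1-p) - (1+r)/2) * ((1-p) - (1-r)/2) = 0 := by linear_combination -hp
  constructor
  · rcases mul_eq_zero.mp h1 with h | h
    · exact Or.inl (by linarith)
    · exact Or.inr (by linarith)
  · rcases mul_eq_zero.mp h2 with h | h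
    · exact Or.inl (by linarith)
    · exact Or.inr (by linarith)

theorem qRelEnt_qubit_formula (xρ xσ : Fin 3 → ℝ)
    (hrρ : Real.sqrt (∑ i, xρ i ^ 2) < 1)
    (hrσ0 : 0 < Real.sqrt (∑ i, xσ i ^ 2))
    (hrσ : Real.sqrt (∑ i, xσ i ^ 2) < 1) :
    qRelEnt (bloch 1 xρ) (bloch 1 xσ) =
      (1 / 2) * (Real.sqrt (∑ i, xρ i ^ 2) *
          Real.logb 2 ((1 + Real.sqrt (∑ i, xρ i ^ 2)) / (1 - Real.sqrt (∑ i, xρ i ^ 2)))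
        + Real.logb 2 ((1 - Real.sqrt (∑ i, xρ i ^ 2) ^ 2) / (1 - Real.sqrt (∑ i, xσ i ^ 2) ^ 2))
        - ((∑ i, xρ i * xσ i) / Real.sqrt (∑ i, xσ i ^ 2)) *
          Real.logb 2 ((1 + Real.sqrt (∑ i, xσ i ^ 2)) / (1 - Real.sqrt (∑ i, xσ i ^ 2)))) := by
  set rρ := Real.sqrt (∑ i, xρ i ^ 2) with hrρdef
  set rσ := Real.sqrt (∑ i, xσ i ^ 2) with hrσdef
  set d := ∑ i, xρ i * xσ i with hddef
  have hrρ0 : 0 ≤ rρ := Real.sqrt_nonneg _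
  have hsqρ : ∑ i, xρ i ^ 2 = rρ ^ 2 := (Real.sq_sqrt (by positivity)).symm
  have hsqσ : ∑ i, xσ i ^ 2 = rσ ^ 2 := (Real.sq_sqrt (by positivity)).symm
  have hρ := bloch_herm xρ
  have hσ := bloch_herm xσ
  -- eigenvalue sums and products
  have hsa : hρ.eigenvalues 0 + hρ.eigenvalues 1 = 1 := by
    have h : ((hρ.eigenvalues 0 + hρ.eigenvalues 1 : ℝ) : ℂ) = ((1:ℝ) : ℂ) := by
      push_cast
      rw [← Fin.sum_univ_two (f := fun i => ((hρ.eigenvalues i : ℝ) : ℂ)),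
        ← trace_eq_sum_eig hρ, bloch_trace]
    exact_mod_cast h
  have hpa : hρ.eigenvalues 0 * hρ.eigenvalues 1 = (1 - rρ^2)/4 := by
    have h : ((hρ.eigenvalues 0 * hρ.eigenvalues 1 : ℝ) : ℂ) = (((1 - rρ^2)/4 : ℝ) : ℂ) := by
      push_cast
      rw [← Fin.prod_univ_two (f := fun i => ((hρ.eigenvalues i : ℝ) : ℂ)),
        ← (show (bloch 1 xρ).det = ∏ i, ((hρ.eigenvalues i : ℝ) : ℂ) from
          hρ.det_eq_prod_eigenvalues), bloch_det, hsqρ]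
      push_cast
      ring
    exact_mod_cast h
  have hsb : hσ.eigenvalues 0 + hσ.eigenvalues 1 = 1 := by
    have h : ((hσ.eigenvalues 0 + hσ.eigenvalues 1 : ℝ) : ℂ) = ((1:ℝ) : ℂ) := by
      push_cast
      rw [← Fin.sum_univ_two (f := fun i => ((hσ.eigenvalues i : ℝ) : ℂ)),
        ← trace_eq_sum_eig hσ, bloch_trace]
    exact_mod_cast h
  have hpb : hσ.eigenvalues 0 * hσ.eigenvalues 1 = (1 - rσ^2)/4 := by
    have h : ((hσ.eigenvalues 0 * hσ.eigenvalues 1 : ℝ) : ℂ) = (((1 - rσ^2)/4 : ℝ) : ℂ) := by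
      push_cast
      rw [← Fin.prod_univ_two (f := fun i => ((hσ.eigenvalues i : ℝ) : ℂ)),
        ← (show (bloch 1 xσ).det = ∏ i, ((hσ.eigenvalues i : ℝ) : ℂ) from
          hσ.det_eq_prod_eigenvalues), bloch_det, hsqσ]
      push_cast
      ring
    exact_mod_cast h
  obtain ⟨ha0, _⟩ := root_pair hsa hpa
  obtain ⟨hb0, hb1⟩ := root_pair hsb hpb
  have hrσne : rσ ≠ 0 := ne_of_gt hrσ0
  set βr := (Real.log ((1+rσ)/2) - Real.log ((1-rσ)/2)) / rσ with hβ
  set αr := Real.log ((1+rσ)/2) - βr * ((1+rσ)/2) with hα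
  have hinterp : ∀ i, ((αr:ℂ)) + (βr:ℂ) * (hσ.eigenvalues i : ℂ)
      = (Real.log (hσ.eigenvalues i) : ℂ) := by
    intro i
    have hval : hσ.eigenvalues i = (1+rσ)/2 ∨ hσ.eigenvalues i = (1-rσ)/2 := by
      fin_cases i
      · exact hb0
      · exact hb1
    have hre : αr + βr * hσ.eigenvalues i = Real.log (hσ.eigenvalues i) := by
      rcases hval with h | h <;> rw [h]
      · rw [hα]; ring
      · rw [hα, hβ]; field_simp; ring
    exact_mod_cast hre
  have hlogσ : matLog (bloch 1 xσ) = (αr:ℂ) • 1 + (βr:ℂ) • (bloch 1 xσ) :=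
    matLog_eq_affine hσ _ _ hinterp
  have hTσ : ((bloch 1 xρ) * matLog (bloch 1 xσ)).trace
      = ((αr + βr * ((1 + d)/2) : ℝ) : ℂ) := by
    rw [hlogσ, Matrix.mul_add, Matrix.trace_add, Matrix.mul_smul, Matrix.mul_smul,
      Matrix.mul_one, Matrix.trace_smul, Matrix.trace_smul, bloch_trace, bloch_mul_trace]
    simp only [smul_eq_mul]
    rw [hddef]
    push_cast
    ring
  have hTρ : ((bloch 1 xρ) * matLog (bloch 1 xρ)).trace
      = (((1+rρ)/2 * Real.log ((1+rρ)/2) + (1-rρ)/2 * Real.log ((1-rρ)/2) : ℝ) : ℂ) := by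
    rw [trace_mul_matLog_self hρ, Fin.sum_univ_two]
    have hre : hρ.eigenvalues 0 * Real.log (hρ.eigenvalues 0)
        + hρ.eigenvalues 1 * Real.log (hρ.eigenvalues 1)
        = (1+rρ)/2 * Real.log ((1+rρ)/2) + (1-rρ)/2 * Real.log ((1-rρ)/2) := by
      rcases ha0 with h | h
      · have h1 : hρ.eigenvalues 1 = (1-rρ)/2 := by linarith
        rw [h, h1]
      · have h1 : hρ.eigenvalues 1 = (1+rρ)/2 := by linarith
        rw [h, h1]; ring
    exact_mod_cast hre
  rw [qRelEnt, Matrix.mul_sub, Matrix.trace_sub, hTρ, hTσ, Complex.sub_re,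
    Complex.ofReal_re, Complex.ofReal_re]
  -- now a purely real computation
  have h1ρ : (0:ℝ) < 1 + rρ := by linarith
  have h2ρ : (0:ℝ) < 1 - rρ := by linarith
  have h1σ : (0:ℝ) < 1 + rσ := by linarith
  have h2σ : (0:ℝ) < 1 - rσ := by linarith
  have l2 : Real.log 2 ≠ 0 := ne_of_gt (Real.log_pos one_lt_two)
  have e1 : Real.log ((1+rρ)/(1-rρ)) = Real.log (1+rρ) - Real.log (1-rρ) :=
    Real.log_div (ne_of_gt h1ρ) (ne_of_gt h2ρ)
  have e2 : Real.log ((1 - rρ^2)/(1 - rσ^2))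
      = (Real.log (1+rρ) + Real.log (1-rρ)) - (Real.log (1+rσ) + Real.log (1-rσ)) := by
    rw [show (1 - rρ^2 : ℝ) = (1+rρ)*(1-rρ) by ring, show (1 - rσ^2 : ℝ) = (1+rσ)*(1-rσ) by ring,
      Real.log_div (by positivity) (by positivity),
      Real.log_mul (ne_of_gt h1ρ) (ne_of_gt h2ρ), Real.log_mul (ne_of_gt h1σ) (ne_of_gt h2σ)]
  have e3 : Real.log ((1+rσ)/(1-rσ)) = Real.log (1+rσ) - Real.log (1-rσ) :=
    Real.log_div (ne_of_gt h1σ) (ne_of_gt h2σ)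
  have e4 : Real.log ((1+rσ)/2) = Real.log (1+rσ) - Real.log 2 :=
    Real.log_div (ne_of_gt h1σ) two_ne_zero
  have e5 : Real.log ((1-rσ)/2) = Real.log (1-rσ) - Real.log 2 :=
    Real.log_div (ne_of_gt h2σ) two_ne_zero
  have e6 : Real.log ((1+rρ)/2) = Real.log (1+rρ) - Real.log 2 :=
    Real.log_div (ne_of_gt h1ρ) two_ne_zero
  have e7 : Real.log ((1-rρ)/2) = Real.log (1-rρ) - Real.log 2 :=
    Real.log_div (ne_of_gt h2ρ) two_ne_zero
  rw [Real.logb, Real.logb, Real.logb, e1, e2, e3, hα, hβ, e4, e5, e6, e7]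
  field_simp
  ring
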